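/- Approximate renewal relationship (Theorem 2, closed-loop finite-state form). Let S be a nonempty finite state space equipped with a metric d, P a Markov kernel from S to S (the closed-loop transition kernel under a fixed stationary policy), r : S × S → ℝ, γ ∈ (0,1), s₀ ∈ S, and ρ > 0. Let B = {s ∈ S : d(s, s₀) ≤ ρ}. For each s ∈ S define the value V(s) = E[∑_{t=0}^∞ γ^t r(X_t, X_{t+1})] under the trajectory law of the chain started at s. Under the trajectory law from s₀, let τ = inf{t ≥ 1 : X_t ∈ B}, and assume τ < ∞ almost surely; define R^ρ = E[∑_{t=0}^{τ−1} γ^t r(X_t, X_{t+1})], T^ρ = E[∑_{t=0}^{τ−1} γ^t], and T̄^ρ = E[γ^τ]. Suppose there exists L ≥ 0 such that |V(s) − V(s')| ≤ L d(s, s') for all s, s' ∈ B. If s₀ ∈ B, then |V(s₀) − R^ρ/((1 − γ) T^ρ)| ≤ L T̄^ρ ρ / ((1 − γ) T^ρ) ≤ γ L ρ / (1 − γ). -/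

import Mathlib

open scoped Classical

open MeasureTheory Finset

set_option linter.unusedSectionVars false
set_option linter.unusedVariables false
set_option maxHeartbeats 1000000

section AuxRenewal

variable {S : Type*} [Fintype S] [Nonempty S] [MeasurableSpace S] [MeasurableSingletonClass S]

/-- Cylinder event: trajectories agreeing with `x` on coordinates `≤ n`. -/
def cylE (x : ℕ → S) (n : ℕ) : Set (ℕ → S) := {ω | ∀ i ≤ n, ω i = x i}

lemma measurableSet_cylE (x : ℕ → S) (n : ℕ) : MeasurableSet (cylE x n) := by
  have : cylE x n = ⋂ i ∈ Finset.range (n + 1), (fun ω : ℕ → S => ω i) ⁻¹' {x i} := by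
    ext ω
    simp only [cylE, Set.mem_setOf_eq, Set.mem_iInter, Set.mem_preimage,
      Set.mem_singleton_iff, Finset.mem_range, Nat.lt_succ_iff]
  rw [this]
  exact MeasurableSet.biInter (Set.to_countable _)
    (fun i _ => (measurable_pi_apply i) (MeasurableSet.of_discrete (s := {x i})))

lemma cylE_gen :
    (inferInstance : MeasurableSpace (ℕ → S)) =
      MeasurableSpace.generateFrom {A : Set (ℕ → S) | ∃ (x : ℕ → S) (n : ℕ), A = cylE x n} := by
  refine le_antisymm ?_ (MeasurableSpace.generateFrom_le ?_)
  · refine iSup_le fun n => measurable_iff_comap_le.mp ?_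
    intro s _
    -- show preimage of any set under eval n is generated
    have key : ∀ a : S, MeasurableSet[MeasurableSpace.generateFrom
        {A : Set (ℕ → S) | ∃ (x : ℕ → S) (m : ℕ), A = cylE x m}]
        ((fun ω : ℕ → S => ω n) ⁻¹' {a}) := by
      intro a
      have hset : (fun ω : ℕ → S => ω n) ⁻¹' {a} =
          ⋃ (y : {y : Fin (n + 1) → S // y (Fin.last n) = a}),
            cylE (fun i => (y : Fin (n + 1) → S) ⟨min i n, by omega⟩) n := by
        ext ω
        simp only [Set.mem_preimage, Set.mem_singleton_iff, Set.mem_iUnion]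
        constructor
        · intro h
          refine ⟨⟨fun i => ω i, by simpa [Fin.last] using h⟩, ?_⟩
          intro i hi
          simp [Nat.min_eq_left hi]
        · rintro ⟨⟨y, hy⟩, hω⟩
          have h1 := hω n le_rfl
          have h2 : (⟨min n n, by omega⟩ : Fin (n + 1)) = Fin.last n := by
            apply Fin.ext; simp [Fin.last]
          rw [h1]
          simpa [Fin.last] using hy
      rw [hset]
      exact MeasurableSet.iUnion fun y => MeasurableSpace.measurableSet_generateFrom ⟨_, n, rfl⟩
    have : (fun ω : ℕ → S => ω n) ⁻¹' s = ⋃ a ∈ s, (fun ω : ℕ → S => ω n) ⁻¹' {a} := by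
      ext ω; simp
    rw [this]
    exact MeasurableSet.biUnion (Set.to_countable s) fun a _ => key a
  · rintro A ⟨x, n, rfl⟩
    exact measurableSet_cylE x n

lemma cylE_inter_of_le {x y : ℕ → S} {n m : ℕ} (h : n ≤ m) (hagree : ∀ i ≤ n, x i = y i) :
    cylE x n ∩ cylE y m = cylE y m := by
  ext ω
  refine ⟨fun hω => hω.2, fun hω => ⟨fun i hi => (hω i (hi.trans h)).trans (hagree i hi).symm, hω⟩⟩

lemma isPiSystem_cylE :
    IsPiSystem {A : Set (ℕ → S) | ∃ (x : ℕ → S) (n : ℕ), A = cylE x n} := by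
  rintro _ ⟨x, n, rfl⟩ _ ⟨y, m, rfl⟩ ⟨ω, hω1, hω2⟩
  rcases le_total n m with h | h
  · have hagree : ∀ i ≤ n, x i = y i := fun i hi =>
      (hω1 i hi).symm.trans (hω2 i (hi.trans h))
    rw [cylE_inter_of_le h hagree]
    exact ⟨y, m, rfl⟩
  · have hagree : ∀ i ≤ m, y i = x i := fun i hi =>
      (hω2 i hi).symm.trans (hω1 i (hi.trans h))
    rw [Set.inter_comm, cylE_inter_of_le h hagree]
    exact ⟨x, n, rfl⟩

lemma measurable_shift (k : ℕ) : Measurable (fun ω : ℕ → S => fun t => ω (k + t)) :=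
  measurable_pi_lambda _ fun t => measurable_pi_apply _

/-- Markov property at the level of measures: conditionally on a length-`k` cylinder,
the shifted trajectory has law `μ (x k)` scaled by the cylinder probability. -/
lemma markov_map (P : S → S → ℝ) (μ : S → Measure (ℕ → S))
    (hprob : ∀ s, IsProbabilityMeasure (μ s))
    (hμ : ∀ (s : S) (n : ℕ) (x : ℕ → S),
      ((μ s) {ω | ∀ i ≤ n, ω i = x i}).toReal
        = (if x 0 = s then (1 : ℝ) else 0) * ∏ i ∈ range n, P (x i) (x (i + 1)))
    (s : S) (x : ℕ → S) (k : ℕ) :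
    Measure.map (fun ω t => ω (k + t)) ((μ s).restrict (cylE x k))
      = (μ s) (cylE x k) • μ (x k) := by
  haveI := hprob s; haveI := hprob (x k)
  have hcyl : ∀ (s' : S) (n : ℕ) (y : ℕ → S), μ s' (cylE y n) ≠ ⊤ :=
    fun s' n y => (measure_ne_top _ _)
  haveI : IsFiniteMeasure ((μ s) (cylE x k) • μ (x k)) := by
    constructor
    rw [Measure.smul_apply, smul_eq_mul]
    exact ENNReal.mul_lt_top (measure_lt_top _ _) (measure_lt_top _ _)
  refine ext_of_generate_finite _ cylE_gen isPiSystem_cylE ?_ ?_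
  · rintro A ⟨y, n, rfl⟩
    rw [Measure.map_apply (measurable_shift k) (measurableSet_cylE y n),
      Measure.restrict_apply (MeasurableSet.preimage (measurableSet_cylE y n) (measurable_shift k)),
      Measure.smul_apply, smul_eq_mul]
    by_cases hxy : y 0 = x k
    · set z : ℕ → S := fun i => if i ≤ k then x i else y (i - k) with hz
      have hset : (fun ω : ℕ → S => fun t => ω (k + t)) ⁻¹' cylE y n ∩ cylE x k
          = cylE z (k + n) := by
        ext ω
        simp only [Set.mem_inter_iff, Set.mem_preimage, cylE, Set.mem_setOf_eq]
        constructor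
        · rintro ⟨h1, h2⟩ i hi
          by_cases hik : i ≤ k
          · rw [hz]; simp only [hik, if_pos]; exact h2 i hik
          · have hik' : i - k ≤ n := by omega
            have : i = k + (i - k) := by omega
            rw [hz]; simp only [hik, if_neg, if_false]
            rw [this, show k + (i - k) - k = i - k by omega]; exact h1 (i - k) hik'
        · intro h
          constructor
          · intro j hj
            have hkj : k + j ≤ k + n := by omega
            have := h (k + j) hkj
            rcases Nat.eq_zero_or_pos j with hj0 | hj0
            · subst hj0
              rw [this]; rw [hz]; simp only [Nat.add_zero, le_refl, if_pos]
              exact hxy ▸ (by simp [hxy])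
            · rw [this, hz]; simp only [show ¬ (k + j ≤ k) by omega, if_false]
              congr 1; omega
          · intro i hi
            have := h i (by omega)
            rw [this, hz]; simp only [hi, if_pos]
      rw [hset]
      have hzreal := hμ s (k + n) z
      have hxreal := hμ s k x
      have hyreal := hμ (x k) n y
      have hprod : ((μ s) (cylE z (k + n))).toReal
          = ((μ s) (cylE x k)).toReal * ((μ (x k)) (cylE y n)).toReal := by
        rw [show cylE z (k+n) = {ω : ℕ → S | ∀ i ≤ k + n, ω i = z i} from rfl, hzreal,
          show cylE x k = {ω : ℕ → S | ∀ i ≤ k, ω i = x i} from rfl, hxreal,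
          show cylE y n = {ω : ℕ → S | ∀ i ≤ n, ω i = y i} from rfl, hyreal, if_pos hxy]
        have hz0 : z 0 = x 0 := by simp [hz]
        rw [hz0, Finset.prod_range_add]
        have e1 : ∀ i ∈ range k, P (z i) (z (i + 1)) = P (x i) (x (i + 1)) := by
          intro i hi
          rw [Finset.mem_range] at hi
          rw [hz]; simp only [show i ≤ k by omega, if_pos, show i + 1 ≤ k by omega]
        have e2 : ∀ i ∈ range n, P (z (k + i)) (z (k + i + 1)) = P (y i) (y (i + 1)) := by
          intro i hi
          have hzi : z (k + i) = y i := by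
            rcases Nat.eq_zero_or_pos i with h0 | h0
            · subst h0; rw [hz]; simp [hxy]
            · rw [hz]; simp only [show ¬ (k + i ≤ k) by omega, if_false]
              congr 1; omega
          have hzi1 : z (k + i + 1) = y (i + 1) := by
            rw [hz]; simp only [show ¬ (k + i + 1 ≤ k) by omega, if_false]
            congr 1; omega
          rw [hzi, hzi1]
        rw [Finset.prod_congr rfl e1, Finset.prod_congr rfl e2]
        ring
      have hfin2 : (μ s) (cylE x k) * (μ (x k)) (cylE y n) ≠ ⊤ :=
        ENNReal.mul_ne_top (hcyl _ _ _) (hcyl _ _ _)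
      refine (ENNReal.toReal_eq_toReal_iff' (hcyl _ _ _) hfin2).mp ?_
      rw [hprod, ENNReal.toReal_mul]
    · have hset : (fun ω : ℕ → S => fun t => ω (k + t)) ⁻¹' cylE y n ∩ cylE x k = ∅ := by
        ext ω
        simp only [Set.mem_inter_iff, Set.mem_preimage, cylE, Set.mem_setOf_eq,
          Set.mem_empty_iff_false, iff_false, not_and]
        intro h1 h2
        exact hxy ((h1 0 (Nat.zero_le n)).symm.trans (by rw [Nat.add_zero]; exact h2 k le_rfl))
      rw [hset]
      have : μ (x k) (cylE y n) = 0 := by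
        have h2 := hμ (x k) n y
        have : ((μ (x k)) (cylE y n)).toReal = 0 := by
          rw [show ({ω : ℕ → S | ∀ i ≤ n, ω i = y i}) = cylE y n from rfl] at h2
          rw [h2, if_neg hxy, zero_mul]
        exact (ENNReal.toReal_eq_zero_iff _).mp this |>.resolve_right (hcyl _ _ _)
      rw [this, mul_zero, measure_empty]
  · rw [Measure.map_apply (measurable_shift k) MeasurableSet.univ, Set.preimage_univ,
      Measure.restrict_apply MeasurableSet.univ, Set.univ_inter, Measure.smul_apply,
      smul_eq_mul, measure_univ, mul_one]
/-- Integral form of the Markov property on a cylinder. -/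
lemma int_markov (P : S → S → ℝ) (μ : S → Measure (ℕ → S))
    (hprob : ∀ s, IsProbabilityMeasure (μ s))
    (hμ : ∀ (s : S) (n : ℕ) (x : ℕ → S),
      ((μ s) {ω | ∀ i ≤ n, ω i = x i}).toReal
        = (if x 0 = s then (1 : ℝ) else 0) * ∏ i ∈ range n, P (x i) (x (i + 1)))
    (s : S) (x : ℕ → S) (k : ℕ) (f : (ℕ → S) → ℝ) (hf : Measurable f) :
    ∫ ω in cylE x k, f (fun t => ω (k + t)) ∂(μ s)
      = ((μ s) (cylE x k)).toReal * ∫ ω, f ω ∂(μ (x k)) := by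
  rw [← integral_map (measurable_shift k).aemeasurable hf.aestronglyMeasurable,
    markov_map P μ hprob hμ s x k, integral_smul_measure, smul_eq_mul]

/-- On a set determined by the first `m+1` coordinates, conditioning and shifting by `m`
gives the expectation `V (ω m)`. -/
lemma int_shift_eq (P : S → S → ℝ) (μ : S → Measure (ℕ → S))
    (hprob : ∀ s, IsProbabilityMeasure (μ s))
    (hμ : ∀ (s : S) (n : ℕ) (x : ℕ → S),
      ((μ s) {ω | ∀ i ≤ n, ω i = x i}).toReal
        = (if x 0 = s then (1 : ℝ) else 0) * ∏ i ∈ range n, P (x i) (x (i + 1)))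
    (s₀ : S) (m : ℕ) (A : Set (ℕ → S)) (hAmeas : MeasurableSet A)
    (hAdet : ∀ ω ω' : ℕ → S, (∀ i ≤ m, ω i = ω' i) → (ω ∈ A → ω' ∈ A))
    (G : (ℕ → S) → ℝ) (hG : Measurable G) (V : S → ℝ)
    (hVG : ∀ s, V s = ∫ ω, G ω ∂(μ s))
    (hGint : Integrable G (μ s₀))
    (hGsint : Integrable (fun ω : ℕ → S => G (fun t => ω (m + t))) (μ s₀)) :
    ∫ ω in A, G (fun t => ω (m + t)) ∂(μ s₀) = ∫ ω in A, V (ω m) ∂(μ s₀) := by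
  haveI := hprob s₀
  set Ext : (Fin (m + 1) → S) → (ℕ → S) := fun y i => y ⟨min i m, by omega⟩ with hExt
  have hmem : ∀ (ω : ℕ → S) (y : Fin (m + 1) → S),
      ω ∈ cylE (Ext y) m ↔ ∀ i : Fin (m + 1), ω i = y i := by
    intro ω y
    constructor
    · intro h i
      have h1 := h i (by omega)
      have h2 : (⟨min (i : ℕ) m, by omega⟩ : Fin (m + 1)) = i := by
        apply Fin.ext; simp [Nat.min_eq_left (by omega : (i : ℕ) ≤ m)]
      calc ω i = Ext y i := h1
        _ = y ⟨min (i : ℕ) m, by omega⟩ := rfl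
        _ = y i := by rw [h2]
    · intro h i hi
      have h1 := h ⟨i, by omega⟩
      have h2 : (⟨min i m, by omega⟩ : Fin (m + 1)) = ⟨i, by omega⟩ := by
        apply Fin.ext; simp [Nat.min_eq_left hi]
      calc ω i = y ⟨i, by omega⟩ := h1
        _ = y ⟨min i m, by omega⟩ := by rw [h2]
        _ = Ext y i := rfl
  have hcover : A = ⋃ y : Fin (m + 1) → S, (A ∩ cylE (Ext y) m) := by
    ext ω
    simp only [Set.mem_iUnion, Set.mem_inter_iff]
    constructor
    · intro h
      exact ⟨fun i => ω i, h, (hmem ω _).mpr fun i => rfl⟩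
    · rintro ⟨y, hy, _⟩; exact hy
  have hdisj : Pairwise (Function.onFun Disjoint
      (fun y : Fin (m + 1) → S => A ∩ cylE (Ext y) m)) := by
    intro y y' hyy'
    refine Set.disjoint_left.mpr ?_
    rintro ω ⟨_, h1⟩ ⟨_, h2⟩
    apply hyy'
    funext i
    exact ((hmem ω y).mp h1 i).symm.trans ((hmem ω y').mp h2 i)
  have hm : ∀ y : Fin (m + 1) → S, MeasurableSet (A ∩ cylE (Ext y) m) :=
    fun y => hAmeas.inter (measurableSet_cylE _ _)
  have hkey : ∀ y : Fin (m + 1) → S,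
      ∫ ω in A ∩ cylE (Ext y) m, G (fun t => ω (m + t)) ∂(μ s₀)
        = ∫ ω in A ∩ cylE (Ext y) m, V (ω m) ∂(μ s₀) := by
    intro y
    by_cases hne : (A ∩ cylE (Ext y) m).Nonempty
    · obtain ⟨ω₀, hω₀A, hω₀C⟩ := hne
      have hsub : A ∩ cylE (Ext y) m = cylE (Ext y) m := by
        refine Set.inter_eq_right.mpr fun ω' hω' => ?_
        refine hAdet ω₀ ω' (fun i hi => ?_) hω₀A
        exact (hω₀C i hi).trans (hω' i hi).symm
      rw [hsub]
      have h2 : (⟨min m m, by omega⟩ : Fin (m + 1)) = Fin.last m := by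
        apply Fin.ext; simp [Fin.last]
      rw [int_markov P μ hprob hμ s₀ (Ext y) m G hG, ← hVG (Ext y m)]
      have : ∀ ω ∈ cylE (Ext y) m, V (ω m) = V (Ext y m) := by
        intro ω hω; rw [hω m le_rfl]
      rw [setIntegral_congr_fun (measurableSet_cylE _ _) this, setIntegral_const, smul_eq_mul]; rfl
    · rw [Set.not_nonempty_iff_eq_empty] at hne
      rw [hne]
      simp
  calc ∫ ω in A, G (fun t => ω (m + t)) ∂(μ s₀)
      = ∑' y : Fin (m + 1) → S, ∫ ω in A ∩ cylE (Ext y) m, G (fun t => ω (m + t)) ∂(μ s₀) := by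
        conv_lhs => rw [hcover]
        exact integral_iUnion hm hdisj (hcover ▸ hGsint.integrableOn)
    _ = ∑' y : Fin (m + 1) → S, ∫ ω in A ∩ cylE (Ext y) m, V (ω m) ∂(μ s₀) := by
        exact tsum_congr hkey
    _ = ∫ ω in A, V (ω m) ∂(μ s₀) := by
        conv_rhs => rw [hcover]
        refine (integral_iUnion hm hdisj (hcover ▸ ?_)).symm
        have : Measurable fun ω : ℕ → S => V (ω m) :=
          Measurable.of_discrete.comp (measurable_pi_apply m)
        refine Integrable.integrableOn ?_
        obtain ⟨C, hC⟩ := Finite.exists_le fun s : S => |V s|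
        refine Integrable.mono' (integrable_const C) this.aestronglyMeasurable
          (ae_of_all _ fun ω => ?_)
        rw [Real.norm_eq_abs]
        exact hC (ω m)
end AuxRenewal

/-- **Approximate renewal relationship (Theorem 2, closed-loop finite-state form).**
Let `S` be a nonempty finite metric state space, `P` a Markov transition kernel
on `S` (finite-state form: a row-stochastic matrix), `r : S × S → ℝ`,
`γ ∈ (0,1)`, `s₀ ∈ S` and `ρ > 0`, and let `B = {s : dist s s₀ ≤ ρ}`.
For each start state `s`, let `μ s` be the trajectory law of the chain started
at `s` (characterized by its cylinder probabilities, as given by the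
Ionescu–Tulcea construction) and `V s = E_{μ s}[∑_{t≥0} γ^t r(X_t, X_{t+1})]`.
Under `μ s₀`, let `τ = inf {t ≥ 1 : X_t ∈ B}` (assumed finite a.s.) and set
`Rρ = E[∑_{t<τ} γ^t r(X_t, X_{t+1})]`, `Tρ = E[∑_{t<τ} γ^t]`, `T̄ρ = E[γ^τ]`.
If `V` is `L`-Lipschitz on `B` with `L ≥ 0` and `s₀ ∈ B`, then
`|V(s₀) − Rρ/((1 − γ) Tρ)| ≤ L T̄ρ ρ / ((1 − γ) Tρ) ≤ γ L ρ / (1 − γ)`. -/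
theorem approximate_renewal_relationship
    {S : Type*} [Fintype S] [Nonempty S] [MetricSpace S]
    [MeasurableSpace S] [MeasurableSingletonClass S]
    (P : S → S → ℝ) (hP0 : ∀ s s', 0 ≤ P s s') (hP1 : ∀ s, ∑ s', P s s' = 1)
    (r : S → S → ℝ) (γ : ℝ) (hγ : γ ∈ Set.Ioo (0 : ℝ) 1) (s₀ : S)
    (ρ : ℝ) (hρ : 0 < ρ)
    (B : Set S) (hB : B = {s : S | dist s s₀ ≤ ρ})
    (μ : S → Measure (ℕ → S)) (hprob : ∀ s, IsProbabilityMeasure (μ s))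
    (hμ : ∀ (s : S) (n : ℕ) (x : ℕ → S),
      ((μ s) {ω | ∀ i ≤ n, ω i = x i}).toReal
        = (if x 0 = s then (1 : ℝ) else 0) * ∏ i ∈ range n, P (x i) (x (i + 1)))
    (V : S → ℝ)
    (hV : ∀ s, V s = ∫ ω, (∑' t : ℕ, γ ^ t * r (ω t) (ω (t + 1))) ∂(μ s))
    (τ : (ℕ → S) → ℕ)
    (hτ : ∀ ω, τ ω = sInf {t : ℕ | 1 ≤ t ∧ ω t ∈ B})
    (hτfin : ∀ᵐ ω ∂(μ s₀), ∃ t : ℕ, 1 ≤ t ∧ ω t ∈ B)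
    (Rρ Tρ Tbarρ : ℝ)
    (hRρ : Rρ = ∫ ω, (∑ t ∈ range (τ ω), γ ^ t * r (ω t) (ω (t + 1))) ∂(μ s₀))
    (hTρ : Tρ = ∫ ω, (∑ t ∈ range (τ ω), γ ^ t) ∂(μ s₀))
    (hTbarρ : Tbarρ = ∫ ω, γ ^ (τ ω) ∂(μ s₀))
    (L : ℝ) (hL : 0 ≤ L)
    (hLip : ∀ s ∈ B, ∀ s' ∈ B, |V s - V s'| ≤ L * dist s s')
    (hs₀ : s₀ ∈ B) :
    |V s₀ - Rρ / ((1 - γ) * Tρ)| ≤ L * Tbarρ * ρ / ((1 - γ) * Tρ) ∧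
      L * Tbarρ * ρ / ((1 - γ) * Tρ) ≤ γ * L * ρ / (1 - γ) := by
  haveI := hprob s₀
  obtain ⟨hγ0, hγ1⟩ := hγ
  have h1γ : (0:ℝ) < 1 - γ := by linarith
  -- bound on r
  obtain ⟨M₀, hM₀⟩ := Finite.exists_le fun p : S × S => |r p.1 p.2|
  set M := max M₀ 0 with hM
  have hMr : ∀ a b : S, |r a b| ≤ M := fun a b => le_trans (hM₀ (a, b)) (le_max_left _ _)
  have hM0 : (0:ℝ) ≤ M := le_max_right _ _
  set G : (ℕ → S) → ℝ := fun ω => ∑' t : ℕ, γ ^ t * r (ω t) (ω (t + 1)) with hG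
  have hsumg : Summable (fun t : ℕ => M * γ ^ t) :=
    (summable_geometric_of_lt_one hγ0.le hγ1).mul_left M
  have htermb : ∀ (ω : ℕ → S) (t : ℕ), ‖γ ^ t * r (ω t) (ω (t + 1))‖ ≤ M * γ ^ t := by
    intro ω t
    rw [Real.norm_eq_abs, abs_mul, abs_pow, abs_of_pos hγ0]
    calc γ ^ t * |r (ω t) (ω (t + 1))| ≤ γ ^ t * M :=
          mul_le_mul_of_nonneg_left (hMr _ _) (pow_nonneg hγ0.le t)
      _ = M * γ ^ t := mul_comm _ _
  have hGsummable : ∀ ω : ℕ → S, Summable fun t : ℕ => γ ^ t * r (ω t) (ω (t + 1)) :=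
    fun ω => Summable.of_norm_bounded hsumg (htermb ω)
  have hgeo : ∑' t : ℕ, γ ^ t = (1 - γ)⁻¹ := tsum_geometric_of_lt_one hγ0.le hγ1
  have hMgeo : ∑' t : ℕ, M * γ ^ t = M / (1 - γ) := by
    rw [tsum_mul_left, hgeo]; ring
  have hGbound : ∀ ω, |G ω| ≤ M / (1 - γ) := by
    intro ω
    rw [hG, ← Real.norm_eq_abs, ← hMgeo]
    exact tsum_of_norm_bounded hsumg.hasSum (htermb ω)
  have hterm_meas : ∀ t : ℕ, Measurable fun ω : ℕ → S => γ ^ t * r (ω t) (ω (t + 1)) := by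
    intro t
    have h0 : (fun ω : ℕ → S => r (ω t) (ω (t + 1)))
        = (fun p : S × S => r p.1 p.2) ∘ (fun ω : ℕ → S => (ω t, ω (t + 1))) := rfl
    have h1 : Measurable fun ω : ℕ → S => r (ω t) (ω (t + 1)) := by
      rw [h0]
      exact Measurable.of_discrete.comp
        ((measurable_pi_apply t).prodMk (measurable_pi_apply (t + 1)))
    exact h1.const_mul _
  have hGmeas : Measurable G := by
    apply measurable_of_tendsto_metrizable
      (f := fun n (ω : ℕ → S) => ∑ t ∈ range n, γ ^ t * r (ω t) (ω (t + 1)))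
    · exact fun n => Finset.measurable_sum _ fun t _ => hterm_meas t
    · rw [tendsto_pi_nhds]
      exact fun ω => (hGsummable ω).hasSum.tendsto_sum_nat
  have hBmeas : MeasurableSet B := .of_discrete
  -- τ facts
  have hτ_spec : ∀ ω : ℕ → S, (∃ t, 1 ≤ t ∧ ω t ∈ B) →
      1 ≤ τ ω ∧ ω (τ ω) ∈ B ∧ ∀ j, 1 ≤ j → j < τ ω → ω j ∉ B := by
    intro ω h
    have hne : {t : ℕ | 1 ≤ t ∧ ω t ∈ B}.Nonempty := h
    have hmem := Nat.sInf_mem hne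
    rw [hτ ω]
    exact ⟨hmem.1, hmem.2, fun j hj1 hj2 hjB => Nat.notMem_of_lt_sInf hj2 ⟨hj1, hjB⟩⟩
  set A : ℕ → Set (ℕ → S) := fun k => {ω | τ ω = k + 1} with hA
  have hAiff : ∀ (k : ℕ) (ω : ℕ → S),
      ω ∈ A k ↔ ((∀ j, 1 ≤ j → j ≤ k → ω j ∉ B) ∧ ω (k + 1) ∈ B) := by
    intro k ω
    rw [hA]; simp only [Set.mem_setOf_eq]
    constructor
    · intro h
      have hne : {t : ℕ | 1 ≤ t ∧ ω t ∈ B}.Nonempty := by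
        by_contra hemp
        rw [Set.not_nonempty_iff_eq_empty] at hemp
        rw [hτ ω, hemp, Nat.sInf_empty] at h
        omega
      have hmem := Nat.sInf_mem hne
      rw [hτ ω] at h
      refine ⟨fun j hj1 hjk hjB => ?_, ?_⟩
      · have := Nat.sInf_le (show j ∈ {t : ℕ | 1 ≤ t ∧ ω t ∈ B} from ⟨hj1, hjB⟩)
        omega
      · rw [← h]; exact hmem.2
    · rintro ⟨h1, h2⟩
      rw [hτ ω]
      refine le_antisymm (Nat.sInf_le ⟨by omega, h2⟩) ?_
      refine le_csInf ⟨k + 1, by omega, h2⟩ fun m hm => ?_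
      by_contra hlt
      push_neg at hlt
      exact h1 m hm.1 (by omega) hm.2
  have hnotB : ∀ t : ℕ, MeasurableSet {ω : ℕ → S | 1 ≤ t → ω t ∉ B} := by
    intro t
    by_cases ht : 1 ≤ t
    · have : {ω : ℕ → S | 1 ≤ t → ω t ∉ B} = (fun ω : ℕ → S => ω t) ⁻¹' Bᶜ := by
        ext ω; simp [ht]
      rw [this]; exact (measurable_pi_apply t) hBmeas.compl
    · have : {ω : ℕ → S | 1 ≤ t → ω t ∉ B} = Set.univ := by
        ext ω; simp [ht]
      rw [this]; exact .univ
  have hAmeas : ∀ k, MeasurableSet (A k) := by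
    intro k
    have : A k = (⋂ j ∈ Finset.range (k + 1), {ω : ℕ → S | 1 ≤ j → ω j ∉ B})
        ∩ ((fun ω : ℕ → S => ω (k + 1)) ⁻¹' B) := by
      ext ω
      rw [hAiff]
      simp only [Set.mem_inter_iff, Set.mem_iInter, Set.mem_setOf_eq, Set.mem_preimage,
        Finset.mem_range]
      constructor
      · rintro ⟨h1, h2⟩; exact ⟨fun j hj hj1 => h1 j hj1 (by omega), h2⟩
      · rintro ⟨h1, h2⟩; exact ⟨fun j hj1 hjk => h1 j (by omega) hj1, h2⟩
    rw [this]
    exact (MeasurableSet.biInter (Set.to_countable _) fun j _ => hnotB j).inter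
      ((measurable_pi_apply (k + 1)) hBmeas)
  have hτmeas : Measurable τ := by
    apply measurable_to_countable'
    intro n
    match n with
    | 0 =>
      have : τ ⁻¹' {0} = ⋂ t : ℕ, {ω : ℕ → S | 1 ≤ t → ω t ∉ B} := by
        ext ω
        simp only [Set.mem_preimage, Set.mem_singleton_iff, Set.mem_iInter, Set.mem_setOf_eq]
        rw [hτ ω]
        constructor
        · intro h t ht htB
          have hne : {t : ℕ | 1 ≤ t ∧ ω t ∈ B}.Nonempty := ⟨t, ht, htB⟩
          have := (Nat.sInf_mem hne).1
          omega
        · intro h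
          have : {t : ℕ | 1 ≤ t ∧ ω t ∈ B} = ∅ := by
            ext t
            simp only [Set.mem_setOf_eq, Set.mem_empty_iff_false, iff_false, not_and]
            exact h t
          rw [this, Nat.sInf_empty]
      rw [this]
      exact MeasurableSet.iInter hnotB
    | (k + 1) =>
      have : τ ⁻¹' {k + 1} = A k := by
        ext ω; simp [hA]
      rw [this]; exact hAmeas k
  -- integrability helper
  have hinteg : ∀ (f : (ℕ → S) → ℝ) (C : ℝ), Measurable f → (∀ ω, |f ω| ≤ C) →
      Integrable f (μ s₀) := fun f C hm hb =>
    Integrable.mono' (integrable_const C) hm.aestronglyMeasurable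
      (ae_of_all _ fun ω => by rw [Real.norm_eq_abs]; exact hb ω)
  -- bounds
  have hsum_le : ∀ (n : ℕ) (ω : ℕ → S),
      |∑ t ∈ range n, γ ^ t * r (ω t) (ω (t + 1))| ≤ M / (1 - γ) := by
    intro n ω
    calc |∑ t ∈ range n, γ ^ t * r (ω t) (ω (t + 1))|
        ≤ ∑ t ∈ range n, |γ ^ t * r (ω t) (ω (t + 1))| := Finset.abs_sum_le_sum_abs _ _
      _ ≤ ∑ t ∈ range n, M * γ ^ t := Finset.sum_le_sum fun t _ => by
          rw [← Real.norm_eq_abs]; exact htermb ω t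
      _ ≤ ∑' t : ℕ, M * γ ^ t := Summable.sum_le_tsum (range n)
          (fun t _ => mul_nonneg hM0 (pow_nonneg hγ0.le t)) hsumg
      _ = M / (1 - γ) := hMgeo
  have hVb : ∀ s, |V s| ≤ M / (1 - γ) := by
    intro s
    haveI := hprob s
    rw [hV s, ← Real.norm_eq_abs]
    calc ‖∫ ω, G ω ∂μ s‖ ≤ M / (1 - γ) * ((μ s) Set.univ).toReal :=
          norm_integral_le_of_norm_le_const (ae_of_all _ fun ω => by
            rw [Real.norm_eq_abs]; exact hGbound ω)
      _ = M / (1 - γ) := by simp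
  -- measurable/integrable bundles
  have hshift_meas : ∀ m : ℕ, Measurable fun ω : ℕ → S => fun t => ω (m + t) :=
    fun m => measurable_pi_lambda _ fun t => measurable_pi_apply _
  have hGint : Integrable G (μ s₀) := hinteg G _ hGmeas hGbound
  have hGsint : ∀ m : ℕ, Integrable (fun ω : ℕ → S => G (fun t => ω (m + t))) (μ s₀) :=
    fun m => hinteg _ (M / (1 - γ)) (hGmeas.comp (hshift_meas m)) (fun ω => hGbound _)
  have hgRmeas : Measurable fun ω : ℕ → S => ∑ t ∈ range (τ ω), γ ^ t * r (ω t) (ω (t + 1)) := by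
    have h1 : Measurable fun p : (ℕ → S) × ℕ => ∑ t ∈ range p.2, γ ^ t * r (p.1 t) (p.1 (t + 1)) :=
      measurable_from_prod_countable_left fun n => by
        simpa using Finset.measurable_sum (range n) fun t _ => hterm_meas t
    exact h1.comp (measurable_id.prodMk hτmeas)
  have hgR_int : Integrable (fun ω : ℕ → S => ∑ t ∈ range (τ ω), γ ^ t * r (ω t) (ω (t + 1)))
      (μ s₀) := hinteg _ (M / (1 - γ)) hgRmeas fun ω => hsum_le _ ω
  have hgTmeas : Measurable fun ω : ℕ → S => ∑ t ∈ range (τ ω), γ ^ t := by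
    have h1 : Measurable fun p : (ℕ → S) × ℕ => ∑ t ∈ range p.2, γ ^ t :=
      measurable_from_prod_countable_left fun n => by
        simpa using (measurable_const : Measurable fun _ : ℕ → S => ∑ t ∈ range n, γ ^ t)
    exact h1.comp (measurable_id.prodMk hτmeas)
  have hgT_le : ∀ ω : ℕ → S, |∑ t ∈ range (τ ω), γ ^ t| ≤ (1 - γ)⁻¹ := by
    intro ω
    rw [abs_of_nonneg (Finset.sum_nonneg fun t _ => pow_nonneg hγ0.le t), ← hgeo]
    exact Summable.sum_le_tsum (range (τ ω)) (fun t _ => pow_nonneg hγ0.le t)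
      (summable_geometric_of_lt_one hγ0.le hγ1)
  have hgT_int : Integrable (fun ω : ℕ → S => ∑ t ∈ range (τ ω), γ ^ t) (μ s₀) :=
    hinteg _ _ hgTmeas hgT_le
  have hgbar_meas : Measurable fun ω : ℕ → S => γ ^ (τ ω) :=
    (Measurable.of_discrete (f := fun n : ℕ => γ ^ n)).comp hτmeas
  have hgbar_le : ∀ ω : ℕ → S, |γ ^ (τ ω)| ≤ 1 := fun ω => by
    rw [abs_pow, abs_of_pos hγ0]; exact pow_le_one₀ hγ0.le hγ1.le
  have hgbar_int : Integrable (fun ω : ℕ → S => γ ^ (τ ω)) (μ s₀) :=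
    hinteg _ 1 hgbar_meas hgbar_le
  have hevalτ : Measurable fun ω : ℕ → S => ω (τ ω) :=
    (measurable_from_prod_countable_left (f := fun p : (ℕ → S) × ℕ => p.1 p.2)
      fun n => measurable_pi_apply n).comp (measurable_id.prodMk hτmeas)
  have hgV_meas : Measurable fun ω : ℕ → S => γ ^ (τ ω) * V (ω (τ ω)) :=
    hgbar_meas.mul (Measurable.of_discrete.comp hevalτ)
  have hgV_le : ∀ ω : ℕ → S, |γ ^ (τ ω) * V (ω (τ ω))| ≤ M / (1 - γ) := by
    intro ω
    rw [abs_mul]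
    calc |γ ^ (τ ω)| * |V (ω (τ ω))| ≤ 1 * (M / (1 - γ)) :=
          mul_le_mul (hgbar_le ω) (hVb _) (abs_nonneg _) zero_le_one
      _ = M / (1 - γ) := one_mul _
  have hgV_int : Integrable (fun ω : ℕ → S => γ ^ (τ ω) * V (ω (τ ω))) (μ s₀) :=
    hinteg _ _ hgV_meas hgV_le
  -- splitting G at time k+1
  have hsplit : ∀ (k : ℕ) (ω : ℕ → S),
      G ω = (∑ t ∈ range (k + 1), γ ^ t * r (ω t) (ω (t + 1)))
        + γ ^ (k + 1) * G (fun t => ω ((k + 1) + t)) := by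
    intro k ω
    have h2 : ∀ t : ℕ, γ ^ (t + (k + 1)) * r (ω (t + (k + 1))) (ω ((t + (k + 1)) + 1))
        = γ ^ (k + 1) * (γ ^ t * r (ω ((k + 1) + t)) (ω ((k + 1) + t + 1))) := by
      intro t
      have e1 : t + (k + 1) = (k + 1) + t := by omega
      rw [e1, pow_add]; ring
    calc G ω = ∑' t : ℕ, γ ^ t * r (ω t) (ω (t + 1)) := rfl
      _ = (∑ t ∈ range (k + 1), γ ^ t * r (ω t) (ω (t + 1)))
          + ∑' t : ℕ, γ ^ (t + (k + 1)) * r (ω (t + (k + 1))) (ω ((t + (k + 1)) + 1)) :=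
          (Summable.sum_add_tsum_nat_add (k + 1) (hGsummable ω)).symm
      _ = (∑ t ∈ range (k + 1), γ ^ t * r (ω t) (ω (t + 1)))
          + γ ^ (k + 1) * G (fun t => ω ((k + 1) + t)) := by
          rw [tsum_congr h2, tsum_mul_left]
          rfl
  have hAdet : ∀ (k : ℕ) (ω ω' : ℕ → S), (∀ i ≤ k + 1, ω i = ω' i) → ω ∈ A k → ω' ∈ A k := by
    intro k ω ω' hagree h
    rw [hAiff] at h ⊢
    refine ⟨fun j hj1 hjk => ?_, ?_⟩
    · rw [← hagree j (by omega)]; exact h.1 j hj1 hjk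
    · rw [← hagree (k + 1) le_rfl]; exact h.2
  -- per-k identity
  have hstep : ∀ k : ℕ,
      ∫ ω in A k, G ω ∂μ s₀
        = ∫ ω in A k, ((∑ t ∈ range (τ ω), γ ^ t * r (ω t) (ω (t + 1)))
            + γ ^ (τ ω) * V (ω (τ ω))) ∂μ s₀ := by
    intro k
    have hAk : ∀ ω ∈ A k, τ ω = k + 1 := fun ω h => h
    have hpart_meas : Measurable fun ω : ℕ → S => ∑ t ∈ range (k + 1), γ ^ t * r (ω t) (ω (t + 1)) :=
      Finset.measurable_sum _ fun t _ => hterm_meas t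
    have hpart_int : Integrable (fun ω : ℕ → S => ∑ t ∈ range (k + 1), γ ^ t * r (ω t) (ω (t + 1)))
        (μ s₀) := hinteg _ (M / (1 - γ)) hpart_meas fun ω => hsum_le _ ω
    calc ∫ ω in A k, G ω ∂μ s₀
        = ∫ ω in A k, ((∑ t ∈ range (k + 1), γ ^ t * r (ω t) (ω (t + 1)))
            + γ ^ (k + 1) * G (fun t => ω ((k + 1) + t))) ∂μ s₀ :=
          setIntegral_congr_fun (hAmeas k) fun ω _ => hsplit k ω
      _ = (∫ ω in A k, ∑ t ∈ range (k + 1), γ ^ t * r (ω t) (ω (t + 1)) ∂μ s₀)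
          + γ ^ (k + 1) * ∫ ω in A k, G (fun t => ω ((k + 1) + t)) ∂μ s₀ := by
          rw [integral_add hpart_int.integrableOn
            (((hGsint (k + 1)).const_mul (γ ^ (k + 1))).integrableOn), integral_const_mul]
      _ = (∫ ω in A k, ∑ t ∈ range (k + 1), γ ^ t * r (ω t) (ω (t + 1)) ∂μ s₀)
          + γ ^ (k + 1) * ∫ ω in A k, V (ω (k + 1)) ∂μ s₀ := by
          rw [int_shift_eq P μ hprob hμ s₀ (k + 1) (A k) (hAmeas k) (hAdet k) G hGmeas V
            (fun s => hV s) hGint (hGsint (k + 1))]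
      _ = ∫ ω in A k, ((∑ t ∈ range (k + 1), γ ^ t * r (ω t) (ω (t + 1)))
            + γ ^ (k + 1) * V (ω (k + 1))) ∂μ s₀ := by
          have hVev_int : Integrable (fun ω : ℕ → S => V (ω (k + 1))) (μ s₀) :=
            hinteg _ (M / (1 - γ)) (Measurable.of_discrete.comp (measurable_pi_apply (k + 1)))
              fun ω => hVb _
          rw [integral_add hpart_int.integrableOn ((hVev_int.const_mul (γ ^ (k + 1))).integrableOn),
            integral_const_mul]
      _ = ∫ ω in A k, ((∑ t ∈ range (τ ω), γ ^ t * r (ω t) (ω (t + 1)))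
            + γ ^ (τ ω) * V (ω (τ ω))) ∂μ s₀ := by
          refine setIntegral_congr_fun (hAmeas k) fun ω hω => ?_
          rw [hAk ω hω]
  -- global decomposition
  set U : Set (ℕ → S) := {ω | ∃ t, 1 ≤ t ∧ ω t ∈ B} with hU
  have hUeq : ⋃ k, A k = U := by
    ext ω
    simp only [Set.mem_iUnion, hU, hA, Set.mem_setOf_eq]
    constructor
    · rintro ⟨k, hk⟩
      exact ⟨k + 1, by omega, ((hAiff k ω).mp hk).2⟩
    · intro h
      have h1 := (hτ_spec ω h).1
      exact ⟨τ ω - 1, by omega⟩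
  have hUmeas : MeasurableSet U := by rw [← hUeq]; exact .iUnion hAmeas
  have hrest : (μ s₀).restrict U = μ s₀ := Measure.restrict_eq_self_of_ae_mem hτfin
  have hAdisj : Pairwise (Function.onFun Disjoint A) := by
    intro k k' hkk'
    refine Set.disjoint_left.mpr fun ω h1 h2 => hkk' ?_
    have e1 : τ ω = k + 1 := h1
    have e2 : τ ω = k' + 1 := h2
    omega
  have hdecomp : ∀ f : (ℕ → S) → ℝ, Integrable f (μ s₀) →
      ∫ ω, f ω ∂μ s₀ = ∑' k : ℕ, ∫ ω in A k, f ω ∂μ s₀ := by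
    intro f hf
    conv_lhs => rw [← hrest]
    calc ∫ ω, f ω ∂((μ s₀).restrict U) = ∫ ω in ⋃ k, A k, f ω ∂μ s₀ := by rw [hUeq]
      _ = ∑' k : ℕ, ∫ ω in A k, f ω ∂μ s₀ :=
          integral_iUnion hAmeas hAdisj (hUeq ▸ hf.integrableOn)
  -- main renewal identity
  have hmain : V s₀ = Rρ + ∫ ω, γ ^ (τ ω) * V (ω (τ ω)) ∂μ s₀ := by
    have hd2 : ∫ ω, ((∑ t ∈ range (τ ω), γ ^ t * r (ω t) (ω (t + 1)))
          + γ ^ (τ ω) * V (ω (τ ω))) ∂μ s₀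
        = ∑' k : ℕ, ∫ ω in A k, ((∑ t ∈ range (τ ω), γ ^ t * r (ω t) (ω (t + 1)))
            + γ ^ (τ ω) * V (ω (τ ω))) ∂μ s₀ :=
      hdecomp _ (hgR_int.add hgV_int)
    rw [hV s₀, hdecomp G hGint, tsum_congr hstep, ← hd2,
      integral_add hgR_int hgV_int, ← hRρ]
  -- error term
  set err : ℝ := ∫ ω, γ ^ (τ ω) * (V (ω (τ ω)) - V s₀) ∂μ s₀ with herr
  have hint2 : Integrable (fun ω : ℕ → S => γ ^ (τ ω) * (V (ω (τ ω)) - V s₀)) (μ s₀) := by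
    refine hinteg _ (M / (1 - γ) + |V s₀|) (hgbar_meas.mul ((Measurable.of_discrete.comp
      hevalτ).sub measurable_const)) fun ω => ?_
    rw [abs_mul]
    calc |γ ^ (τ ω)| * |V (ω (τ ω)) - V s₀| ≤ 1 * (M / (1 - γ) + |V s₀|) := by
          refine mul_le_mul (hgbar_le ω) ?_ (abs_nonneg _) zero_le_one
          calc |V (ω (τ ω)) - V s₀| ≤ |V (ω (τ ω))| + |V s₀| := abs_sub _ _
            _ ≤ M / (1 - γ) + |V s₀| := by gcongr; exact hVb _
      _ = M / (1 - γ) + |V s₀| := one_mul _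
  have hVdecomp : ∫ ω, γ ^ (τ ω) * V (ω (τ ω)) ∂μ s₀ = Tbarρ * V s₀ + err := by
    calc ∫ ω, γ ^ (τ ω) * V (ω (τ ω)) ∂μ s₀
        = ∫ ω, (γ ^ (τ ω) * V s₀ + γ ^ (τ ω) * (V (ω (τ ω)) - V s₀)) ∂μ s₀ := by
          congr 1; funext ω; ring
      _ = (∫ ω, γ ^ (τ ω) * V s₀ ∂μ s₀) + err := by
          rw [integral_add (hgbar_int.mul_const _) hint2]
      _ = Tbarρ * V s₀ + err := by rw [integral_mul_const, hTbarρ]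
  have herrb : |err| ≤ L * Tbarρ * ρ := by
    have hτB : ∀ᵐ ω ∂μ s₀, |γ ^ (τ ω) * (V (ω (τ ω)) - V s₀)| ≤ γ ^ (τ ω) * (L * ρ) := by
      filter_upwards [hτfin] with ω hω
      have hmem := hτ_spec ω hω
      have hdist : dist (ω (τ ω)) s₀ ≤ ρ := by
        have := hmem.2.1; rw [hB] at this; exact this
      have hlip := hLip _ hmem.2.1 _ hs₀
      rw [abs_mul, abs_pow, abs_of_pos hγ0]
      refine mul_le_mul_of_nonneg_left ?_ (pow_nonneg hγ0.le _)
      exact hlip.trans ((mul_le_mul_of_nonneg_left hdist hL))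
    have h1 : |err| ≤ ∫ ω, |γ ^ (τ ω) * (V (ω (τ ω)) - V s₀)| ∂μ s₀ := by
      rw [herr, ← Real.norm_eq_abs]
      refine (norm_integral_le_integral_norm _).trans (le_of_eq ?_)
      congr 1
    have h2 : ∫ ω, |γ ^ (τ ω) * (V (ω (τ ω)) - V s₀)| ∂μ s₀
        ≤ ∫ ω, γ ^ (τ ω) * (L * ρ) ∂μ s₀ :=
      integral_mono_ae hint2.abs (hgbar_int.mul_const _) hτB
    calc |err| ≤ ∫ ω, γ ^ (τ ω) * (L * ρ) ∂μ s₀ := h1.trans h2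
      _ = Tbarρ * (L * ρ) := by rw [integral_mul_const, hTbarρ]
      _ = L * Tbarρ * ρ := by ring
  -- geometric identities
  have hTbar0 : 0 ≤ Tbarρ := by
    rw [hTbarρ]; exact integral_nonneg fun ω => pow_nonneg hγ0.le _
  have hgeom_id : 1 - Tbarρ = (1 - γ) * Tρ := by
    have hptwise : ∀ ω : ℕ → S, (1 - γ) * ∑ t ∈ range (τ ω), γ ^ t = 1 - γ ^ (τ ω) := by
      intro ω
      have h := geom_sum_mul γ (τ ω)
      linear_combination -h
    have h2 : ∫ ω, (1 - γ ^ (τ ω)) ∂μ s₀ = 1 - Tbarρ := by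
      rw [integral_sub (integrable_const 1) hgbar_int, integral_const, hTbarρ]
      simp
    calc 1 - Tbarρ = ∫ ω, (1 - γ ^ (τ ω)) ∂μ s₀ := h2.symm
      _ = ∫ ω, (1 - γ) * ∑ t ∈ range (τ ω), γ ^ t ∂μ s₀ := by
          congr 1; funext ω; exact (hptwise ω).symm
      _ = (1 - γ) * Tρ := by rw [integral_const_mul, ← hTρ]
  have hTρ1 : 1 ≤ Tρ := by
    rw [hTρ]
    have h1 : ∫ _ω : ℕ → S, (1:ℝ) ∂μ s₀ = 1 := by simp
    rw [← h1]
    refine integral_mono_ae (integrable_const 1) hgT_int ?_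
    filter_upwards [hτfin] with ω hω
    have h1τ := (hτ_spec ω hω).1
    calc (1:ℝ) = γ ^ 0 := (pow_zero γ).symm
      _ ≤ ∑ t ∈ range (τ ω), γ ^ t :=
          Finset.single_le_sum (f := fun t => γ ^ t) (fun t _ => pow_nonneg hγ0.le t)
            (Finset.mem_range.mpr (by omega))
  have hTbarγ : Tbarρ ≤ γ * Tρ := by
    rw [hTbarρ, hTρ, ← integral_const_mul]
    refine integral_mono_ae hgbar_int (hgT_int.const_mul γ) ?_
    filter_upwards [hτfin] with ω hω
    have h1τ := (hτ_spec ω hω).1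
    calc γ ^ (τ ω) = γ * γ ^ (τ ω - 1) := by
          rw [← pow_succ']; congr 1; omega
      _ ≤ γ * ∑ t ∈ range (τ ω), γ ^ t := by
          refine mul_le_mul_of_nonneg_left ?_ hγ0.le
          exact Finset.single_le_sum (f := fun t => γ ^ t) (fun t _ => pow_nonneg hγ0.le t)
            (Finset.mem_range.mpr (by omega))
  -- conclusion
  have hD : 0 < (1 - γ) * Tρ := mul_pos h1γ (by linarith)
  have hkey : V s₀ * ((1 - γ) * Tρ) = Rρ + err := by
    rw [← hgeom_id]
    have h := hmain
    rw [hVdecomp] at h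
    nlinarith [h]
  constructor
  · have he : V s₀ - Rρ / ((1 - γ) * Tρ) = err / ((1 - γ) * Tρ) := by
      field_simp
      linarith [hkey]
    rw [he, abs_div, abs_of_pos hD]
    exact (div_le_div_iff_of_pos_right hD).mpr herrb
  · rw [div_le_div_iff₀ hD h1γ]
    nlinarith [mul_le_mul_of_nonneg_left hTbarγ (mul_nonneg (mul_nonneg hL hρ.le) h1γ.le)]
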